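/- arXiv:2101.02881 — 4 statements merged into one kernel-verified Lean document; each statement's English description precedes it below -/
import Mathlib

section
/- Suppose real numbers x_f, y_f, d, β, ρ, θ_P0, θ_Pf, x̄0, ȳ0, v_x, v_y with ρ > 0 and v_x ≠ 0, and an integer n, satisfy the RSR geometric equations x_f + ρ·cos(θ_Pf − π/2) = ρ + d·cos β and y_f + ρ·sin(θ_Pf − π/2) = d·sin β, the collinearity condition (y_f − ȳ0)·v_x = v_y·(x_f − x̄0), the interception-time equation ρ·(θ_P0 − θ_Pf + 2nπ) + d = √((x_f − x̄0)² + (y_f − ȳ0)²) / √(v_x² + v_y²), and the sign condition (x_f − x̄0)/v_x ≥ 0. Then a1 + a2·sin β + a3·cos β = 0, where a1 = (ρ − ρ·sin θ_Pf)·v_y − ((v_y/v_x)·x̄0 − ȳ0 + ρ·cos θ_Pf)·v_x, a2 = −ρ + ρ·sin θ_Pf − (−x̄0/v_x − ρ·(θ_P0 − θ_Pf + 2nπ))·v_x, and a3 = (v_y/v_x)·x̄0 − ȳ0 + ρ·cos θ_Pf + (−x̄0/v_x − ρ·(θ_P0 − θ_Pf + 2nπ))·v_y. -/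
open Real

theorem rsr_transcendental_equation
    (x_f y_f d β ρ θP0 θPf x0 y0 vx vy : ℝ) (n : ℤ)
    (hρ : 0 < ρ) (hvx : vx ≠ 0)
    (hgeo1 : x_f + ρ * Real.cos (θPf - π / 2) = ρ + d * Real.cos β)
    (hgeo2 : y_f + ρ * Real.sin (θPf - π / 2) = d * Real.sin β)
    (hline : (y_f - y0) * vx = vy * (x_f - x0))
    (htime : ρ * (θP0 - θPf + 2 * (n : ℝ) * π) + d =
      Real.sqrt ((x_f - x0) ^ 2 + (y_f - y0) ^ 2) / Real.sqrt (vx ^ 2 + vy ^ 2))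
    (hsign : (x_f - x0) / vx ≥ 0) :
    ((ρ - ρ * Real.sin θPf) * vy - ((vy / vx) * x0 - y0 + ρ * Real.cos θPf) * vx)
      + (-ρ + ρ * Real.sin θPf - (-(x0 / vx) - ρ * (θP0 - θPf + 2 * (n : ℝ) * π)) * vx)
          * Real.sin β
      + ((vy / vx) * x0 - y0 + ρ * Real.cos θPf
          + (-(x0 / vx) - ρ * (θP0 - θPf + 2 * (n : ℝ) * π)) * vy) * Real.cos β = 0 := by
  have hvv : (0:ℝ) < vx ^ 2 + vy ^ 2 := by positivity
  have hsq : (x_f - x0) ^ 2 + (y_f - y0) ^ 2 = ((x_f - x0) / vx) ^ 2 * (vx ^ 2 + vy ^ 2) := by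
    field_simp
    linear_combination ((y_f - y0) * vx + vy * (x_f - x0)) * hline
  have hs : Real.sqrt ((x_f - x0) ^ 2 + (y_f - y0) ^ 2)
      = ((x_f - x0) / vx) * Real.sqrt (vx ^ 2 + vy ^ 2) := by
    rw [hsq, Real.sqrt_mul (sq_nonneg _), Real.sqrt_sq hsign]
  have hsv : Real.sqrt (vx ^ 2 + vy ^ 2) ≠ 0 := by
    positivity
  have hT : ρ * (θP0 - θPf + 2 * (n : ℝ) * π) + d = (x_f - x0) / vx := by
    rw [htime, hs, mul_div_assoc, div_self hsv, mul_one]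
  have hx : x_f - x0 = vx * (ρ * (θP0 - θPf + 2 * (n : ℝ) * π) + d) := by
    rw [hT]; field_simp
  have hy : y_f - y0 = vy * (ρ * (θP0 - θPf + 2 * (n : ℝ) * π) + d) := by
    apply mul_right_cancel₀ hvx
    linear_combination hline + vy * hx
  have g1 : x_f + ρ * Real.sin θPf = ρ + d * Real.cos β := by
    rw [← hgeo1, Real.cos_sub_pi_div_two]
  have g2 : y_f - ρ * Real.cos θPf = d * Real.sin β := by
    rw [← hgeo2, Real.sin_sub_pi_div_two]; ring
  field_simp
  linear_combination vx * ((Real.sin β - vy) * g1 + (vx - Real.cos β) * g2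
    + (vy - Real.sin β) * hx + (Real.cos β - vx) * hy)
end

section
/- Suppose real numbers x_f, y_f, d, β, ρ, θ_P0, θ_Pf, x̄0, ȳ0, v_x, v_y with ρ > 0 and v_x ≠ 0, and an integer n, satisfy the LSL geometric equations x_f + ρ·cos(θ_Pf + π/2) = −ρ + d·cos β and y_f + ρ·sin(θ_Pf + π/2) = d·sin β, the collinearity condition (y_f − ȳ0)·v_x = v_y·(x_f − x̄0), the interception-time equation ρ·(θ_Pf − θ_P0 + 2nπ) + d = √((x_f − x̄0)² + (y_f − ȳ0)²) / √(v_x² + v_y²), and the sign condition (x_f − x̄0)/v_x ≥ 0. Then b1 + b2·sin β + b3·cos β = 0, where b1 = (−ρ + ρ·sin θ_Pf)·v_y − ((v_y/v_x)·x̄0 − ȳ0 − ρ·cos θ_Pf)·v_x, b2 = ρ − ρ·sin θ_Pf + (x̄0/v_x + ρ·(θ_Pf − θ_P0 + 2nπ))·v_x, and b3 = (−x̄0/v_x − ρ·(θ_Pf − θ_P0 + 2nπ))·v_y + (v_y/v_x)·x̄0 − ȳ0 − ρ·cos θ_Pf. -/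
open Real

theorem lsl_transcendental_equation
    (x_f y_f d β ρ θP0 θPf x0 y0 vx vy : ℝ) (n : ℤ)
    (hρ : 0 < ρ) (hvx : vx ≠ 0)
    (hgeo1 : x_f + ρ * Real.cos (θPf + π / 2) = -ρ + d * Real.cos β)
    (hgeo2 : y_f + ρ * Real.sin (θPf + π / 2) = d * Real.sin β)
    (hline : (y_f - y0) * vx = vy * (x_f - x0))
    (htime : ρ * (θPf - θP0 + 2 * (n : ℝ) * π) + d =
      Real.sqrt ((x_f - x0) ^ 2 + (y_f - y0) ^ 2) / Real.sqrt (vx ^ 2 + vy ^ 2))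
    (hsign : (x_f - x0) / vx ≥ 0) :
    ((-ρ + ρ * Real.sin θPf) * vy - ((vy / vx) * x0 - y0 - ρ * Real.cos θPf) * vx)
      + (ρ - ρ * Real.sin θPf + (x0 / vx + ρ * (θPf - θP0 + 2 * (n : ℝ) * π)) * vx)
          * Real.sin β
      + ((-(x0 / vx) - ρ * (θPf - θP0 + 2 * (n : ℝ) * π)) * vy
          + (vy / vx) * x0 - y0 - ρ * Real.cos θPf) * Real.cos β = 0 := by
  set A : ℝ := (x_f - x0) / vx with hA
  have hxf : x_f - x0 = A * vx := by rw [hA, div_mul_cancel₀ _ hvx]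
  have hyf : y_f - y0 = A * vy := by
    have h : (y_f - y0 - A * vy) * vx = 0 := by
      rw [sub_mul, hline, hxf]; ring
    rcases mul_eq_zero.mp h with h | h
    · linarith
    · exact absurd h hvx
  have hsum : (x_f - x0) ^ 2 + (y_f - y0) ^ 2 = A ^ 2 * (vx ^ 2 + vy ^ 2) := by
    rw [hxf, hyf]; ring
  have hpos : (0:ℝ) < vx ^ 2 + vy ^ 2 := by positivity
  have hsqrt : Real.sqrt ((x_f - x0) ^ 2 + (y_f - y0) ^ 2)
      = A * Real.sqrt (vx ^ 2 + vy ^ 2) := by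
    rw [hsum, Real.sqrt_mul (sq_nonneg A), Real.sqrt_sq hsign]
  have hsq : Real.sqrt (vx ^ 2 + vy ^ 2) ≠ 0 := by positivity
  have hT : ρ * (θPf - θP0 + 2 * (n : ℝ) * π) + d = A := by
    rw [htime, hsqrt, mul_div_assoc, div_self hsq, mul_one]
  have h1 : x_f - ρ * Real.sin θPf = -ρ + d * Real.cos β := by
    rw [← hgeo1, Real.cos_add_pi_div_two]; ring
  have h2 : y_f + ρ * Real.cos θPf = d * Real.sin β := by
    rw [← hgeo2, Real.sin_add_pi_div_two]
  have hKx : (ρ * (θPf - θP0 + 2 * (n : ℝ) * π) + d) * vx = x_f - x0 := by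
    rw [hT, hxf]
  have hKy : (ρ * (θPf - θP0 + 2 * (n : ℝ) * π) + d) * vy = y_f - y0 := by
    rw [hT, hyf]
  have hx0 : x0 = (x0 / vx) * vx := by field_simp
  have hvy : vy = (vy / vx) * vx := by field_simp
  linear_combination (Real.sin β - vy) * h1 + (vx - Real.cos β) * h2 +
    Real.sin β * hKx - Real.cos β * hKy - hline +
    (Real.cos β * (vy / vx) - Real.sin β) * hx0 +
    (x0 - Real.cos β * (x0 / vx)) * hvy
end

section
/- Let e1, e2, e3, e4, e5 be real constants and define E(β) = 1 + ((e1·cos β − e2·sin β)·(e3·cos β + e4·sin β) − (e1·sin β + e2·cos β + e5)·(e4·cos β − e3·sin β)) / (e3·cos β + e4·sin β)². Let β be a real number with cos(β/2) ≠ 0 and e3·cos β + e4·sin β ≠ 0, and set t = tan(β/2). Then E(β) = 0 if and only if p1·t⁴ + p2·t³ + p3·t² + p4·t + p5 = 0, where p1 = e3² + e1·e3 + e4·e5 − e2·e4, p2 = −4·e3·e4 + 2·e3·e5, p3 = 2·e1·e3 − 2·e2·e4 − 2·e3² + 4·e4², p4 = 4·e3·e4 + 2·e3·e5, and p5 = e3²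 + e1·e3 − e2·e4 − e4·e5. -/
open Real

theorem derivative_zero_iff_quartic
    (e1 e2 e3 e4 e5 : ℝ)
    (E : ℝ → ℝ)
    (hE : ∀ β, E β = 1 + ((e1 * Real.cos β - e2 * Real.sin β)
            * (e3 * Real.cos β + e4 * Real.sin β)
          - (e1 * Real.sin β + e2 * Real.cos β + e5)
            * (e4 * Real.cos β - e3 * Real.sin β))
        / (e3 * Real.cos β + e4 * Real.sin β) ^ 2)
    (β t : ℝ)
    (hcos : Real.cos (β / 2) ≠ 0)
    (hden : e3 * Real.cos β + e4 * Real.sin β ≠ 0)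
    (ht : t = Real.tan (β / 2)) :
    E β = 0 ↔
      (e3 ^ 2 + e1 * e3 + e4 * e5 - e2 * e4) * t ^ 4
        + (-(4 * e3 * e4) + 2 * e3 * e5) * t ^ 3
        + (2 * e1 * e3 - 2 * e2 * e4 - 2 * e3 ^ 2 + 4 * e4 ^ 2) * t ^ 2
        + (4 * e3 * e4 + 2 * e3 * e5) * t
        + (e3 ^ 2 + e1 * e3 - e2 * e4 - e4 * e5) = 0 := by
  set c2 := Real.cos (β / 2) with hc2
  set s2 := Real.sin (β / 2) with hs2
  have hpy : s2 ^ 2 + c2 ^ 2 = 1 := Real.sin_sq_add_cos_sq _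
  have ht' : t = s2 / c2 := by rw [ht, Real.tan_eq_sin_div_cos]
  have hβ : β = 2 * (β / 2) := by ring
  have hcβ : Real.cos β = c2 ^ 2 - s2 ^ 2 := by
    rw [hβ]; exact Real.cos_two_mul' _
  have hsβ : Real.sin β = 2 * s2 * c2 := by
    rw [hβ]; exact Real.sin_two_mul _
  have h1t : (1 : ℝ) + t ^ 2 ≠ 0 := by positivity
  have haux : 1 + (s2 / c2) ^ 2 = 1 / c2 ^ 2 := by field_simp; linarith
  have hc : Real.cos β = (1 - t ^ 2) / (1 + t ^ 2) := by
    rw [hcβ, ht', haux]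
    field_simp
  have hs : Real.sin β = 2 * t / (1 + t ^ 2) := by
    rw [hsβ, ht', haux]
    field_simp
  set d := e3 * Real.cos β + e4 * Real.sin β with hd
  set N := (e1 * Real.cos β - e2 * Real.sin β) * (e3 * Real.cos β + e4 * Real.sin β)
      - (e1 * Real.sin β + e2 * Real.cos β + e5) * (e4 * Real.cos β - e3 * Real.sin β) with hN
  have hd2 : d ^ 2 ≠ 0 := pow_ne_zero _ hden
  have step1 : E β = 0 ↔ d ^ 2 + N = 0 := by
    rw [hE]
    rw [show (1 : ℝ) + N / d ^ 2 = (d ^ 2 + N) / d ^ 2 by field_simp]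
    rw [div_eq_zero_iff]
    simp [hd2]
  have key : (e3 ^ 2 + e1 * e3 + e4 * e5 - e2 * e4) * t ^ 4
        + (-(4 * e3 * e4) + 2 * e3 * e5) * t ^ 3
        + (2 * e1 * e3 - 2 * e2 * e4 - 2 * e3 ^ 2 + 4 * e4 ^ 2) * t ^ 2
        + (4 * e3 * e4 + 2 * e3 * e5) * t
        + (e3 ^ 2 + e1 * e3 - e2 * e4 - e4 * e5)
      = (d ^ 2 + N) * (1 + t ^ 2) ^ 2 := by
    rw [hd, hN, hc, hs]
    field_simp
    ring
  rw [step1, key, mul_eq_zero]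
  simp [pow_ne_zero _ h1t]
end

section
/- Let e1, e2, e3, e4, e5 be real constants, define E(β) = 1 + ((e1·cos β − e2·sin β)·(e3·cos β + e4·sin β) − (e1·sin β + e2·cos β + e5)·(e4·cos β − e3·sin β)) / (e3·cos β + e4·sin β)², and set p1 = e3² + e1·e3 + e4·e5 − e2·e4, p2 = −4·e3·e4 + 2·e3·e5, p3 = 2·e1·e3 − 2·e2·e4 − 2·e3² + 4·e4², p4 = 4·e3·e4 + 2·e3·e5, p5 = e3² + e1·e3 − e2·e4 − e4·e5. If not all of p1, p2, p3, p4, p5 are zero, then the set of β in [0, 2π) with β ≠ π, e3·cos β + e4·sin β ≠ 0, and E(β) = 0 is finite and has at most 4 elements. -/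
open Real

private lemma injOn_angle : ∀ a ∈ Set.Ico (0:ℝ) (2*π), ∀ b ∈ Set.Ico (0:ℝ) (2*π),
    Real.cos a = Real.cos b → Real.sin a = Real.sin b → a = b := by
  intro a ha b hb hc hs
  have h : (a : Real.Angle) = b := Real.Angle.cos_sin_inj hc hs
  rw [Real.Angle.angle_eq_iff_two_pi_dvd_sub] at h
  obtain ⟨k, hk⟩ := h
  have hpi := Real.pi_pos
  have hk0 : k = 0 := by
    by_contra hne
    have h1 : (1:ℝ) ≤ |(k:ℝ)| := by
      have := Int.one_le_abs (by omega : k ≠ 0)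
      exact_mod_cast this
    have : |a - b| < 2 * π := by
      rw [abs_sub_lt_iff]; constructor <;> [skip; skip] <;>
        · obtain ⟨ha0, ha2⟩ := ha; obtain ⟨hb0, hb2⟩ := hb; linarith
    rw [hk, abs_mul] at this
    have : 2 * π * 1 ≤ |2 * π| * |(k:ℝ)| := by
      rw [abs_of_pos (by linarith)]
      exact mul_le_mul_of_nonneg_left h1 (by linarith)
    linarith
  rw [hk0] at hk
  push_cast at hk
  linarith

private lemma cos_half_ne_zero {β : ℝ} (hβ : β ∈ Set.Ico (0:ℝ) (2*π)) (hne : β ≠ π) :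
    Real.cos (β / 2) ≠ 0 := by
  obtain ⟨h0, h2⟩ := hβ
  have hpi := Real.pi_pos
  rcases lt_or_gt_of_ne hne with h | h
  · have : 0 < Real.cos (β / 2) :=
      Real.cos_pos_of_mem_Ioo ⟨by linarith, by linarith⟩
    exact ne_of_gt this
  · have : Real.cos (β / 2) < 0 :=
      Real.cos_neg_of_pi_div_two_lt_of_lt (by linarith) (by linarith)
    exact ne_of_lt this

private lemma cos_double_half (β : ℝ) :
    Real.cos β = Real.cos (β/2) ^ 2 - Real.sin (β/2) ^ 2 := by
  have h := Real.cos_two_mul (β/2)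
  rw [show 2*(β/2) = β by ring] at h
  rw [h]; linear_combination Real.sin_sq_add_cos_sq (β/2)

private lemma sin_double_half (β : ℝ) :
    Real.sin β = 2 * Real.sin (β/2) * Real.cos (β/2) := by
  have h := Real.sin_two_mul (β/2)
  rw [show 2*(β/2) = β by ring] at h
  rw [h]

private lemma tan_half_cos {β : ℝ} (hc : Real.cos (β / 2) ≠ 0) :
    Real.cos β * (1 + Real.tan (β / 2) ^ 2) = 1 - Real.tan (β / 2) ^ 2 ∧
    Real.sin β * (1 + Real.tan (β / 2) ^ 2) = 2 * Real.tan (β / 2) := by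
  have hpyth := Real.sin_sq_add_cos_sq (β / 2)
  rw [cos_double_half β, sin_double_half β, Real.tan_eq_sin_div_cos]
  constructor
  · field_simp
    linear_combination (Real.cos (β / 2) ^ 2 - Real.sin (β / 2) ^ 2) * hpyth
  · field_simp
    ring_nf
    rw [show β * (1 / 2) = β / 2 by ring]
    linear_combination Real.sin (β / 2) * hpyth

theorem derivative_zeros_finite_card_le_four
    (e1 e2 e3 e4 e5 : ℝ)
    (E : ℝ → ℝ)
    (hE : ∀ β, E β = 1 + ((e1 * Real.cos β - e2 * Real.sin β)
            * (e3 * Real.cos β + e4 * Real.sin β)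
          - (e1 * Real.sin β + e2 * Real.cos β + e5)
            * (e4 * Real.cos β - e3 * Real.sin β))
        / (e3 * Real.cos β + e4 * Real.sin β) ^ 2)
    (hp : ¬ (e3 ^ 2 + e1 * e3 + e4 * e5 - e2 * e4 = 0
        ∧ -(4 * e3 * e4) + 2 * e3 * e5 = 0
        ∧ 2 * e1 * e3 - 2 * e2 * e4 - 2 * e3 ^ 2 + 4 * e4 ^ 2 = 0
        ∧ 4 * e3 * e4 + 2 * e3 * e5 = 0
        ∧ e3 ^ 2 + e1 * e3 - e2 * e4 - e4 * e5 = 0)) :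
    ({β ∈ Set.Ico (0 : ℝ) (2 * π) | β ≠ π
        ∧ e3 * Real.cos β + e4 * Real.sin β ≠ 0 ∧ E β = 0}).Finite
    ∧ ({β ∈ Set.Ico (0 : ℝ) (2 * π) | β ≠ π
        ∧ e3 * Real.cos β + e4 * Real.sin β ≠ 0 ∧ E β = 0}).ncard ≤ 4 := by
  set p1 := e3 ^ 2 + e1 * e3 + e4 * e5 - e2 * e4 with hp1
  set p2 := -(4 * e3 * e4) + 2 * e3 * e5 with hp2
  set p3 := 2 * e1 * e3 - 2 * e2 * e4 - 2 * e3 ^ 2 + 4 * e4 ^ 2 with hp3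
  set p4 := 4 * e3 * e4 + 2 * e3 * e5 with hp4
  set p5 := e3 ^ 2 + e1 * e3 - e2 * e4 - e4 * e5 with hp5
  set P : Polynomial ℝ := Polynomial.C p1 * Polynomial.X ^ 4
    + Polynomial.C p2 * Polynomial.X ^ 3 + Polynomial.C p3 * Polynomial.X ^ 2
    + Polynomial.C p4 * Polynomial.X + Polynomial.C p5 with hPdef
  have hPne : P ≠ 0 := by
    intro h
    apply hp
    have c4 : P.coeff 4 = p1 := by simp [hPdef, Polynomial.coeff_add, Polynomial.coeff_C_mul,
      Polynomial.coeff_X_pow, Polynomial.coeff_C]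
    have c3 : P.coeff 3 = p2 := by simp [hPdef, Polynomial.coeff_add, Polynomial.coeff_C_mul,
      Polynomial.coeff_X_pow, Polynomial.coeff_C]
    have c2 : P.coeff 2 = p3 := by simp [hPdef, Polynomial.coeff_add, Polynomial.coeff_C_mul,
      Polynomial.coeff_X_pow, Polynomial.coeff_C]
    have c1 : P.coeff 1 = p4 := by simp [hPdef, Polynomial.coeff_add, Polynomial.coeff_C_mul,
      Polynomial.coeff_X_pow, Polynomial.coeff_C]
    have c0 : P.coeff 0 = p5 := by simp [hPdef, Polynomial.coeff_add, Polynomial.coeff_C_mul,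
      Polynomial.coeff_X_pow, Polynomial.coeff_C]
    rw [h, Polynomial.coeff_zero] at c4 c3 c2 c1 c0
    exact ⟨c4.symm, c3.symm, c2.symm, c1.symm, c0.symm⟩
  have hdeg : P.natDegree ≤ 4 := by
    rw [hPdef]; compute_degree
  -- root set
  have hRfin : ({x : ℝ | Polynomial.IsRoot P x}).Finite := Polynomial.finite_setOf_isRoot hPne
  have hRcard : ({x : ℝ | Polynomial.IsRoot P x}).ncard ≤ 4 := by
    have heq : {x : ℝ | Polynomial.IsRoot P x} = ↑P.roots.toFinset := by
      ext x
      simp [Polynomial.mem_roots, hPne, Polynomial.IsRoot]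
    rw [heq, Set.ncard_coe_finset]
    calc P.roots.toFinset.card ≤ Multiset.card P.roots := P.roots.toFinset_card_le
      _ ≤ P.natDegree := P.card_roots'
      _ ≤ 4 := hdeg
  set S := {β ∈ Set.Ico (0 : ℝ) (2 * π) | β ≠ π
      ∧ e3 * Real.cos β + e4 * Real.sin β ≠ 0 ∧ E β = 0} with hS
  -- the map
  have hmaps : ∀ β ∈ S, Polynomial.IsRoot P (Real.tan (β / 2)) := by
    rintro β ⟨hico, hβπ, hD, hEz⟩
    have hc := cos_half_ne_zero hico hβπ
    set s := Real.sin (β / 2)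
    set c := Real.cos (β / 2)
    have hpyth : s ^ 2 + c ^ 2 = 1 := Real.sin_sq_add_cos_sq (β / 2)
    have hcos : Real.cos β = c ^ 2 - s ^ 2 := cos_double_half β
    have hsin : Real.sin β = 2 * s * c := sin_double_half β
    -- from E β = 0 get D^2 + N = 0
    have hkey : (e3 * Real.cos β + e4 * Real.sin β) ^ 2
        + ((e1 * Real.cos β - e2 * Real.sin β)
            * (e3 * Real.cos β + e4 * Real.sin β)
          - (e1 * Real.sin β + e2 * Real.cos β + e5)
            * (e4 * Real.cos β - e3 * Real.sin β)) = 0 := by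
      have h := hE β
      rw [hEz] at h
      have hD2 : (e3 * Real.cos β + e4 * Real.sin β) ^ 2 ≠ 0 := pow_ne_zero 2 hD
      field_simp at h
      have hD2' : (Real.cos β * e3 + Real.sin β * e4) ^ 2 ≠ 0 := by
        rw [show Real.cos β * e3 + Real.sin β * e4 = e3 * Real.cos β + e4 * Real.sin β by ring]
        exact hD2
      have h3 := h
      rw [eq_comm, ← eq_sub_iff_add_eq', zero_sub, div_eq_iff hD2'] at h3
      linear_combination h3
    -- identity in s, c
    have hident : p1 * s ^ 4 + p2 * s ^ 3 * c + p3 * s ^ 2 * c ^ 2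
        + p4 * s * c ^ 3 + p5 * c ^ 4 = 0 := by
      rw [hcos, hsin] at hkey
      rw [hp1, hp2, hp3, hp4, hp5]
      linear_combination hkey - (e4 * e5 * (c^2 - s^2) - 2 * e3 * e5 * s * c) * hpyth
    -- evaluate
    have htan : Real.tan (β / 2) = s / c := Real.tan_eq_sin_div_cos (β / 2)
    show P.eval (Real.tan (β / 2)) = 0
    rw [hPdef, htan]
    simp only [Polynomial.eval_add, Polynomial.eval_mul, Polynomial.eval_pow,
      Polynomial.eval_C, Polynomial.eval_X]
    have hgoal : p1 * (s/c)^4 + p2 * (s/c)^3 + p3 * (s/c)^2 + p4 * (s/c) + p5 = 0 := by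
      have h2 : (p1 * s^4 + p2 * s^3 * c + p3 * s^2 * c^2 + p4 * s * c^3 + p5 * c^4) / c^4
          = 0 := by rw [hident]; simp
      rw [← h2]
      field_simp
    linear_combination hgoal
  have hinj : Set.InjOn (fun β => Real.tan (β / 2)) S := by
    rintro a ⟨haico, haπ, -, -⟩ b ⟨hbico, hbπ, -, -⟩ hab
    simp only at hab
    have hca := cos_half_ne_zero haico haπ
    have hcb := cos_half_ne_zero hbico hbπ
    obtain ⟨ha1, ha2⟩ := tan_half_cos hca
    obtain ⟨hb1, hb2⟩ := tan_half_cos hcb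
    rw [hab] at ha1 ha2
    have hpos : (0:ℝ) < 1 + Real.tan (b / 2) ^ 2 := by positivity
    have hcc : Real.cos a = Real.cos b := by
      have := ha1.trans hb1.symm
      exact mul_right_cancel₀ (ne_of_gt hpos) this
    have hss : Real.sin a = Real.sin b := by
      have := ha2.trans hb2.symm
      exact mul_right_cancel₀ (ne_of_gt hpos) this
    exact injOn_angle a haico b hbico hcc hss
  have himg : (fun β => Real.tan (β / 2)) '' S ⊆ {x : ℝ | Polynomial.IsRoot P x} := by
    rintro x ⟨β, hβ, rfl⟩
    exact hmaps β hβ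
  have hSfin : S.Finite := Set.Finite.of_finite_image (hRfin.subset himg) hinj
  refine ⟨hSfin, ?_⟩
  calc S.ncard = ((fun β => Real.tan (β / 2)) '' S).ncard :=
        (Set.ncard_image_of_injOn hinj).symm
    _ ≤ ({x : ℝ | Polynomial.IsRoot P x}).ncard := Set.ncard_le_ncard himg hRfin
    _ ≤ 4 := hRcard
end
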